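/- Fix λ ∈ [0,1] and a policy μ, and define N_λ^μ Q := (I − γλP^μ)⁻¹(r + γ(1−λ) P(MQ)) where (MQ)(y) := max_a Q y a. Then: (i) the operator λT^μ + (1−λ)T is a γ-contraction in sup norm, hence has a unique fixed point; and (ii) Q : X → A → ℝ satisfies N_λ^μ Q = Q if and only if λ T^μ Q + (1−λ) T Q = Q. In particular the unique fixed point of N_λ^μ coincides with the unique fixed point of λT^μ + (1−λ)T. -/

import Mathlib

open scoped BigOperators

namespace RLPQL

variable {X A : Type*} [Fintype X] [Fintype A]

/-- `P` is a transition kernel: nonnegative and rows sum to one. -/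
def IsKernel (P : X → A → X → ℝ) : Prop :=
  (∀ x a y, 0 ≤ P x a y) ∧ ∀ x a, ∑ y, P x a y = 1

/-- `π` is a (Markov) policy: nonnegative and sums to one over actions. -/
def IsPolicy (π : X → A → ℝ) : Prop :=
  (∀ x a, 0 ≤ π x a) ∧ ∀ x, ∑ a, π x a = 1

/-- `(πQ)(x) = ∑_a π x a * Q x a`. -/
def polQ (π Q : X → A → ℝ) : X → ℝ := fun x => ∑ a, π x a * Q x a

/-- `(PV)(x,a) = ∑_y P x a y * V y`. -/
def PV (P : X → A → X → ℝ) (V : X → ℝ) : X → A → ℝ := fun x a => ∑ y, P x a y * V y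

/-- `P^π Q = P (π Q)`. -/
def Ppol (P : X → A → X → ℝ) (π Q : X → A → ℝ) : X → A → ℝ := PV P (polQ π Q)

/-- Bellman operator `T^π Q = r + γ P^π Q`. -/
def bellman (P : X → A → X → ℝ) (r : X → A → ℝ) (γ : ℝ) (π Q : X → A → ℝ) : X → A → ℝ :=
  fun x a => r x a + γ * Ppol P π Q x a

/-- Bellman optimality operator `(T Q)(x,a) = r x a + γ ∑_y P x a y * max_b Q y b`. -/
noncomputable def optBellman (P : X → A → X → ℝ) (r : X → A → ℝ) (γ : ℝ) (Q : X → A → ℝ) :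
    X → A → ℝ :=
  fun x a => r x a + γ * ∑ y, P x a y * (⨆ b, Q y b)

/-- `π` is greedy with respect to `Q`. -/
def IsGreedy (π Q : X → A → ℝ) : Prop := ∀ x, polQ π Q x = ⨆ a, Q x a

/-- `(I - c P^μ)⁻¹ f = ∑_{t=0}^∞ c^t (P^μ)^t f`. -/
noncomputable def resolvent (P : X → A → X → ℝ) (c : ℝ) (μ : X → A → ℝ) (f : X → A → ℝ) :
    X → A → ℝ :=
  fun x a => ∑' t : ℕ, c ^ t * ((Ppol P μ)^[t] f) x a

/-- Peng's Q(λ) operator `N_λ^{μ,π} Q = (I - γλ P^μ)⁻¹ (r + γ(1-λ) P^π Q)`. -/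
noncomputable def peng (P : X → A → X → ℝ) (r : X → A → ℝ) (γ lam : ℝ) (μ π Q : X → A → ℝ) :
    X → A → ℝ :=
  resolvent P (γ * lam) μ (fun x a => r x a + γ * (1 - lam) * Ppol P π Q x a)

/-- The mixture policy `c·μ + (1-c)·π`. -/
def mixP (c : ℝ) (μ π : X → A → ℝ) : X → A → ℝ := fun x a => c * μ x a + (1 - c) * π x a

end RLPQL

open RLPQL

namespace RLPQL
variable {X A : Type*} [Fintype X] [Fintype A]

/-- The operator `N_λ^μ Q := (I - γλ P^μ)⁻¹ (r + γ(1-λ) P (M Q))`, where `(MQ)(y) = max_a Q y a`. -/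
noncomputable def pengGreedy (P : X → A → X → ℝ) (r : X → A → ℝ) (γ lam : ℝ) (μ : X → A → ℝ)
    (Q : X → A → ℝ) : X → A → ℝ :=
  resolvent P (γ * lam) μ (fun x a => r x a + γ * (1 - lam) * PV P (fun y => ⨆ b, Q y b) x a)

/-- The operator `λ T^μ + (1-λ) T`. -/
noncomputable def mixBellman (P : X → A → X → ℝ) (r : X → A → ℝ) (γ lam : ℝ) (μ : X → A → ℝ)
    (Q : X → A → ℝ) : X → A → ℝ :=
  fun x a => lam * bellman P r γ μ Q x a + (1 - lam) * optBellman P r γ Q x a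

end RLPQL

section Aux

variable {X A : Type*} [Fintype X] [Fintype A] [Nonempty X] [Nonempty A]

lemma abs_le_pinorm (Q : X → A → ℝ) (x : X) (a : A) : |Q x a| ≤ ‖Q‖ := by
  calc |Q x a| = ‖Q x a‖ := (Real.norm_eq_abs _).symm
    _ ≤ ‖Q x‖ := norm_le_pi_norm (Q x) a
    _ ≤ ‖Q‖ := norm_le_pi_norm Q x

lemma Ppol_abs_le {P : X → A → X → ℝ} {μ : X → A → ℝ} (hP : IsKernel P) (hμ : IsPolicy μ)
    (g : X → A → ℝ) (x : X) (a : A) {M : ℝ} (hM : ∀ y b, |g y b| ≤ M) :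
    |Ppol P μ g x a| ≤ M := by
  have hinner : ∀ y, |polQ μ g y| ≤ M := by
    intro y
    have : |∑ b, μ y b * g y b| ≤ ∑ b, μ y b * M := by
      refine (Finset.abs_sum_le_sum_abs _ _).trans (Finset.sum_le_sum fun b _ => ?_)
      rw [abs_mul, abs_of_nonneg (hμ.1 y b)]
      exact mul_le_mul_of_nonneg_left (hM y b) (hμ.1 y b)
    simpa [polQ, ← Finset.sum_mul, hμ.2 y] using this
  have : |∑ y, P x a y * polQ μ g y| ≤ ∑ y, P x a y * M := by
    refine (Finset.abs_sum_le_sum_abs _ _).trans (Finset.sum_le_sum fun y _ => ?_)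
    rw [abs_mul, abs_of_nonneg (hP.1 x a y)]
    exact mul_le_mul_of_nonneg_left (hinner y) (hP.1 x a y)
  simpa [Ppol, PV, ← Finset.sum_mul, hP.2 x a] using this

lemma iter_abs_le {P : X → A → X → ℝ} {μ : X → A → ℝ} (hP : IsKernel P) (hμ : IsPolicy μ)
    (f : X → A → ℝ) (t : ℕ) (x : X) (a : A) : |((Ppol P μ)^[t] f) x a| ≤ ‖f‖ := by
  induction t generalizing x a with
  | zero => simpa using abs_le_pinorm f x a
  | succ n ih =>
    rw [Function.iterate_succ_apply']
    exact Ppol_abs_le hP hμ _ x a ih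

lemma summable_res {P : X → A → X → ℝ} {μ : X → A → ℝ} (hP : IsKernel P) (hμ : IsPolicy μ)
    {c : ℝ} (hc0 : 0 ≤ c) (hc1 : c < 1) (f : X → A → ℝ) (x : X) (a : A) :
    Summable (fun t : ℕ => c ^ t * ((Ppol P μ)^[t] f) x a) := by
  refine Summable.of_norm_bounded (g := fun t => ‖f‖ * c ^ t)
    ((summable_geometric_of_lt_one hc0 hc1).mul_left _) fun t => ?_
  rw [Real.norm_eq_abs, abs_mul, abs_pow, abs_of_nonneg hc0, mul_comm]
  exact mul_le_mul_of_nonneg_right (iter_abs_le hP hμ f t x a) (pow_nonneg hc0 t)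

/-- The resolvent identity: `R = f + c P^μ R`. -/
lemma resolvent_identity {P : X → A → X → ℝ} {μ : X → A → ℝ} (hP : IsKernel P) (hμ : IsPolicy μ)
    {c : ℝ} (hc0 : 0 ≤ c) (hc1 : c < 1) (f : X → A → ℝ) (x : X) (a : A) :
    resolvent P c μ f x a = f x a + c * Ppol P μ (resolvent P c μ f) x a := by
  have hsum := summable_res hP hμ hc0 hc1 f
  have key : ∀ y, polQ μ (resolvent P c μ f) y
      = ∑' t : ℕ, c ^ t * polQ μ ((Ppol P μ)^[t] f) y := by
    intro y
    calc polQ μ (resolvent P c μ f) y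
        = ∑ b, ∑' t : ℕ, μ y b * (c ^ t * ((Ppol P μ)^[t] f) y b) := by
          refine Finset.sum_congr rfl fun b _ => ?_
          exact tsum_mul_left.symm
      _ = ∑' t : ℕ, ∑ b, μ y b * (c ^ t * ((Ppol P μ)^[t] f) y b) :=
          (Summable.tsum_finsetSum fun b _ => (hsum y b).mul_left _).symm
      _ = ∑' t : ℕ, c ^ t * polQ μ ((Ppol P μ)^[t] f) y := by
          refine tsum_congr fun t => ?_
          simp only [polQ, Finset.mul_sum]
          exact Finset.sum_congr rfl fun b _ => by ring
  have hsum2 : ∀ y, Summable (fun t : ℕ => c ^ t * polQ μ ((Ppol P μ)^[t] f) y) := by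
    intro y
    have : (fun t : ℕ => c ^ t * polQ μ ((Ppol P μ)^[t] f) y)
        = fun t => ∑ b, μ y b * (c ^ t * ((Ppol P μ)^[t] f) y b) := by
      funext t
      simp only [polQ, Finset.mul_sum]
      exact Finset.sum_congr rfl fun b _ => by ring
    rw [this]
    exact summable_sum fun b _ => (hsum y b).mul_left _
  have key2 : Ppol P μ (resolvent P c μ f) x a
      = ∑' t : ℕ, c ^ t * Ppol P μ ((Ppol P μ)^[t] f) x a := by
    calc Ppol P μ (resolvent P c μ f) x a
        = ∑ y, ∑' t : ℕ, P x a y * (c ^ t * polQ μ ((Ppol P μ)^[t] f) y) := by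
          simp only [Ppol, PV]
          refine Finset.sum_congr rfl fun y _ => ?_
          rw [key y]
          exact tsum_mul_left.symm
      _ = ∑' t : ℕ, ∑ y, P x a y * (c ^ t * polQ μ ((Ppol P μ)^[t] f) y) :=
          (Summable.tsum_finsetSum fun y _ => (hsum2 y).mul_left _).symm
      _ = ∑' t : ℕ, c ^ t * Ppol P μ ((Ppol P μ)^[t] f) x a := by
          refine tsum_congr fun t => ?_
          simp only [Ppol, PV, Finset.mul_sum]
          exact Finset.sum_congr rfl fun y _ => by ring
  calc resolvent P c μ f x a
      = f x a + ∑' t : ℕ, c ^ (t + 1) * ((Ppol P μ)^[t + 1] f) x a := by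
        show (∑' t : ℕ, c ^ t * ((Ppol P μ)^[t] f) x a) = _
        rw [Summable.tsum_eq_zero_add (hsum x a)]
        simp
    _ = f x a + c * Ppol P μ (resolvent P c μ f) x a := by
        rw [key2, ← tsum_mul_left]
        refine congrArg (f x a + ·) (tsum_congr fun t => ?_)
        rw [Function.iterate_succ_apply']
        ring

lemma Ppol_sub {P : X → A → X → ℝ} {μ : X → A → ℝ} (Q Q' : X → A → ℝ) (x : X) (a : A) :
    Ppol P μ Q x a - Ppol P μ Q' x a = Ppol P μ (Q - Q') x a := by
  simp only [Ppol, PV, polQ, Pi.sub_apply]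
  rw [← Finset.sum_sub_distrib]
  refine Finset.sum_congr rfl fun y _ => ?_
  rw [← mul_sub, ← Finset.sum_sub_distrib]
  refine congrArg _ (Finset.sum_congr rfl fun b _ => ?_)
  ring

/-- Uniqueness of fixed points of the affine map `Y ↦ f + c P^μ Y`. -/
lemma affine_unique {P : X → A → X → ℝ} {μ : X → A → ℝ} (hP : IsKernel P) (hμ : IsPolicy μ)
    {c : ℝ} (hc0 : 0 ≤ c) (hc1 : c < 1) (f Q Q' : X → A → ℝ)
    (h : ∀ x a, Q x a = f x a + c * Ppol P μ Q x a)
    (h' : ∀ x a, Q' x a = f x a + c * Ppol P μ Q' x a) : Q = Q' := by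
  have hb : ∀ x a, |Q x a - Q' x a| ≤ c * ‖Q - Q'‖ := by
    intro x a
    have : Q x a - Q' x a = c * Ppol P μ (Q - Q') x a := by
      rw [h x a, h' x a, ← Ppol_sub]; ring
    rw [this, abs_mul, abs_of_nonneg hc0]
    refine mul_le_mul_of_nonneg_left (Ppol_abs_le hP hμ _ x a fun y b => ?_) hc0
    exact abs_le_pinorm (Q - Q') y b
  have hnorm : ‖Q - Q'‖ ≤ c * ‖Q - Q'‖ := by
    rw [pi_norm_le_iff_of_nonneg (mul_nonneg hc0 (norm_nonneg _))]
    intro x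
    rw [pi_norm_le_iff_of_nonneg (mul_nonneg hc0 (norm_nonneg _))]
    intro a
    simpa using hb x a
  have : ‖Q - Q'‖ ≤ 0 := by nlinarith [norm_nonneg (Q - Q')]
  have := le_antisymm this (norm_nonneg _)
  exact sub_eq_zero.mp (by simpa [norm_eq_zero] using this)

lemma iSup_sub_le (Q Q' : X → A → ℝ) (y : X) :
    |(⨆ b, Q y b) - ⨆ b, Q' y b| ≤ ‖Q - Q'‖ := by
  have key : ∀ (R R' : X → A → ℝ), (⨆ b, R y b) - (⨆ b, R' y b) ≤ ‖R - R'‖ := by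
    intro R R'
    rw [sub_le_iff_le_add]
    refine ciSup_le fun b => ?_
    have h1 : R y b - R' y b ≤ ‖R - R'‖ :=
      (le_abs_self _).trans (by simpa using abs_le_pinorm (R - R') y b)
    have h2 : R' y b ≤ ⨆ b, R' y b := le_ciSup (Set.Finite.bddAbove (Set.finite_range _)) b
    linarith
  rw [abs_sub_le_iff]
  exact ⟨key Q Q', by simpa [norm_sub_rev] using key Q' Q⟩

/-- `mixBellman Q x a = f_Q x a + γλ · (P^μ Q) x a` where
`f_Q = r + γ(1-λ) P(MQ)`. -/
lemma mixBellman_decomp (P : X → A → X → ℝ) (r : X → A → ℝ) (γ lam : ℝ) (μ : X → A → ℝ)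
    (Q : X → A → ℝ) (x : X) (a : A) :
    mixBellman P r γ lam μ Q x a
      = (r x a + γ * (1 - lam) * PV P (fun y => ⨆ b, Q y b) x a)
        + (γ * lam) * Ppol P μ Q x a := by
  simp only [mixBellman, bellman, optBellman, PV]
  ring

end Aux

/-- (i) `λT^μ + (1-λ)T` is a `γ`-contraction in sup norm and has a unique
fixed point; (ii) `N_λ^μ Q = Q ↔ λT^μ Q + (1-λ)T Q = Q`. In particular the unique fixed
points of the two operators coincide. -/
theorem pengGreedy_fixedPoint_iff {X A : Type*} [Fintype X] [Fintype A] [Nonempty X] [Nonempty A]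
    (P : X → A → X → ℝ) (r : X → A → ℝ) (γ lam : ℝ)
    (hP : IsKernel P) (hγ0 : 0 ≤ γ) (hγ1 : γ < 1) (hlam0 : 0 ≤ lam) (hlam1 : lam ≤ 1)
    (μ : X → A → ℝ) (hμ : IsPolicy μ) :
    (∀ Q Q' : X → A → ℝ,
        ‖mixBellman P r γ lam μ Q - mixBellman P r γ lam μ Q'‖ ≤ γ * ‖Q - Q'‖) ∧
    (∃! Q : X → A → ℝ, mixBellman P r γ lam μ Q = Q) ∧
    (∀ Q : X → A → ℝ, pengGreedy P r γ lam μ Q = Q ↔ mixBellman P r γ lam μ Q = Q) ∧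
    (∀ Q Q' : X → A → ℝ, pengGreedy P r γ lam μ Q = Q → mixBellman P r γ lam μ Q' = Q' →
        Q = Q') := by
  have hc0 : 0 ≤ γ * lam := mul_nonneg hγ0 hlam0
  have hc1 : γ * lam < 1 := lt_of_le_of_lt (by nlinarith) hγ1
  -- contraction property
  have hcontr : ∀ Q Q' : X → A → ℝ,
      ‖mixBellman P r γ lam μ Q - mixBellman P r γ lam μ Q'‖ ≤ γ * ‖Q - Q'‖ := by
    intro Q Q'
    rw [pi_norm_le_iff_of_nonneg (mul_nonneg hγ0 (norm_nonneg _))]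
    intro x
    rw [pi_norm_le_iff_of_nonneg (mul_nonneg hγ0 (norm_nonneg _))]
    intro a
    have hdiff : mixBellman P r γ lam μ Q x a - mixBellman P r γ lam μ Q' x a
        = (γ * lam) * Ppol P μ (Q - Q') x a
          + (γ * (1 - lam)) * ∑ y, P x a y * ((⨆ b, Q y b) - ⨆ b, Q' y b) := by
      rw [mixBellman_decomp, mixBellman_decomp, ← Ppol_sub]
      have hPVsub : ∑ y, P x a y * ((⨆ b, Q y b) - ⨆ b, Q' y b)
          = PV P (fun y => ⨆ b, Q y b) x a - PV P (fun y => ⨆ b, Q' y b) x a := by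
        simp [PV, ← Finset.sum_sub_distrib, mul_sub]
      rw [hPVsub]
      ring
    have h1 : |Ppol P μ (Q - Q') x a| ≤ ‖Q - Q'‖ :=
      Ppol_abs_le hP hμ _ x a fun y b => abs_le_pinorm (Q - Q') y b
    have h2 : |∑ y, P x a y * ((⨆ b, Q y b) - ⨆ b, Q' y b)| ≤ ‖Q - Q'‖ := by
      have : |∑ y, P x a y * ((⨆ b, Q y b) - ⨆ b, Q' y b)|
          ≤ ∑ y, P x a y * ‖Q - Q'‖ := by
        refine (Finset.abs_sum_le_sum_abs _ _).trans (Finset.sum_le_sum fun y _ => ?_)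
        rw [abs_mul, abs_of_nonneg (hP.1 x a y)]
        exact mul_le_mul_of_nonneg_left (iSup_sub_le Q Q' y) (hP.1 x a y)
      simpa [← Finset.sum_mul, hP.2 x a] using this
    have hlam' : 0 ≤ 1 - lam := by linarith
    calc ‖mixBellman P r γ lam μ Q x a - mixBellman P r γ lam μ Q' x a‖
        = |(γ * lam) * Ppol P μ (Q - Q') x a
          + (γ * (1 - lam)) * ∑ y, P x a y * ((⨆ b, Q y b) - ⨆ b, Q' y b)| := by
          rw [Real.norm_eq_abs, hdiff]
      _ ≤ (γ * lam) * ‖Q - Q'‖ + (γ * (1 - lam)) * ‖Q - Q'‖ := by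
          refine (abs_add_le _ _).trans (add_le_add ?_ ?_)
          · rw [abs_mul, abs_of_nonneg hc0]
            exact mul_le_mul_of_nonneg_left h1 hc0
          · rw [abs_mul, abs_of_nonneg (mul_nonneg hγ0 hlam')]
            exact mul_le_mul_of_nonneg_left h2 (mul_nonneg hγ0 hlam')
      _ = γ * ‖Q - Q'‖ := by ring
  -- the iff between pengGreedy and mixBellman fixed points
  have hiff : ∀ Q : X → A → ℝ,
      pengGreedy P r γ lam μ Q = Q ↔ mixBellman P r γ lam μ Q = Q := by
    intro Q
    have hres : ∀ x a, pengGreedy P r γ lam μ Q x a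
        = (r x a + γ * (1 - lam) * PV P (fun y => ⨆ b, Q y b) x a)
          + (γ * lam) * Ppol P μ (pengGreedy P r γ lam μ Q) x a := fun x a =>
      resolvent_identity hP hμ hc0 hc1
        (fun x a => r x a + γ * (1 - lam) * PV P (fun y => ⨆ b, Q y b) x a) x a
    constructor
    · intro h
      funext x a
      have := hres x a
      rw [h] at this
      rw [mixBellman_decomp]
      exact this.symm
    · intro h
      have hQ : ∀ x a, Q x a
          = (r x a + γ * (1 - lam) * PV P (fun y => ⨆ b, Q y b) x a)
            + (γ * lam) * Ppol P μ Q x a := by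
        intro x a
        conv_lhs => rw [← h]
        exact mixBellman_decomp P r γ lam μ Q x a
      exact affine_unique hP hμ hc0 hc1 _ _ _ hres hQ
  -- existence and uniqueness of mixBellman fixed point via Banach
  have hexu : ∃! Q : X → A → ℝ, mixBellman P r γ lam μ Q = Q := by
    set K : NNReal := ⟨γ, hγ0⟩ with hK
    have hlip : LipschitzWith K (mixBellman P r γ lam μ) := by
      refine LipschitzWith.of_dist_le_mul fun Q Q' => ?_
      rw [dist_eq_norm, dist_eq_norm]
      exact hcontr Q Q'
    have hcw : ContractingWith K (mixBellman P r γ lam μ) := ⟨by exact_mod_cast hγ1, hlip⟩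
    refine ⟨hcw.fixedPoint _, hcw.fixedPoint_isFixedPt, fun Q hQ => ?_⟩
    have h2 : mixBellman P r γ lam μ (hcw.fixedPoint _) = hcw.fixedPoint _ :=
      hcw.fixedPoint_isFixedPt
    have hb := hcontr Q (hcw.fixedPoint _)
    rw [hQ, h2] at hb
    have : ‖Q - hcw.fixedPoint (mixBellman P r γ lam μ)‖ ≤ 0 := by
      nlinarith [norm_nonneg (Q - hcw.fixedPoint (mixBellman P r γ lam μ))]
    have := le_antisymm this (norm_nonneg _)
    exact sub_eq_zero.mp (by simpa [norm_eq_zero] using this)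
  refine ⟨hcontr, hexu, hiff, fun Q Q' h1 h2 => ?_⟩
  obtain ⟨Q₀, -, huniq⟩ := hexu
  rw [huniq Q ((hiff Q).mp h1), huniq Q' h2]
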